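/- arXiv:1712.08024 — 5 statements merged into one kernel-verified Lean document; each statement's English description precedes it below -/
import Mathlib

section
/- For non-negative integers a, b, c, the quantity H(a)·H(b)·H(c)·H(a+b+c) / (H(a+b)·H(b+c)·H(c+a)) is a positive integer, where H(n) = 0!·1!·2!···(n−1)! is the hyperfactorial. -/
open Finset
set_option maxHeartbeats 1000000 in
lemma key_int (q a b g r1 r2 r3 r4 c1 c2 c3 C : ℤ) (hq : 0 < q)
    (ha0 : 0 ≤ a) (ha : a < q) (hb0 : 0 ≤ b) (hb : b < q) (hg0 : 0 ≤ g) (hg : g < q)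
    (hr1 : 0 ≤ r1) (hr1' : r1 < q) (hr2 : 0 ≤ r2) (hr2' : r2 < q)
    (hr3 : 0 ≤ r3) (hr3' : r3 < q) (hr4 : 0 ≤ r4) (hr4' : r4 < q)
    (e1 : q * c1 + r1 = a + b) (e2 : q * c2 + r2 = b + g) (e3 : q * c3 + r3 = g + a)
    (e4 : q * C + r4 = a + b + g) :
    a*(a-1) + b*(b-1) + g*(g-1) + r4*(r4-1) + q*(q-1)*C
      ≤ r1*(r1-1) + r2*(r2-1) + r3*(r3-1) + q*(q-1)*(c1+c2+c3) := by
  have hC0 : 0 ≤ C := by nlinarith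
  have hC2 : C < 3 := by nlinarith
  have hc1 : c1 = 0 ∨ c1 = 1 := by
    have h1 : c1 < 2 := by nlinarith
    have h2 : 0 ≤ c1 := by nlinarith
    omega
  have hc2 : c2 = 0 ∨ c2 = 1 := by
    have h1 : c2 < 2 := by nlinarith
    have h2 : 0 ≤ c2 := by nlinarith
    omega
  have hc3 : c3 = 0 ∨ c3 = 1 := by
    have h1 : c3 < 2 := by nlinarith
    have h2 : 0 ≤ c3 := by nlinarith
    omega
  have hr1e : r1 = a + b - q*c1 := by omega
  have hr2e : r2 = b + g - q*c2 := by omega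
  have hr3e : r3 = g + a - q*c3 := by omega
  have hr4e : r4 = a + b + g - q*C := by omega
  subst hr1e hr2e hr3e hr4e
  have hC : C = 0 ∨ C = 1 ∨ C = 2 := by omega
  rcases hc1 with h1 | h1 <;> rcases hc2 with h2 | h2 <;> rcases hc3 with h3 | h3 <;>
    rcases hC with h4 | h4 | h4 <;> subst h1 h2 h3 h4 <;>
    linarith [mul_nonneg hq.le ha0, mul_nonneg hq.le hb0, mul_nonneg hq.le hg0,
          mul_nonneg hq.le hr1, mul_nonneg hq.le hr2, mul_nonneg hq.le hr3,
          mul_nonneg hq.le hr4, mul_nonneg hq.le (sub_nonneg.mpr hr1'.le),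
          mul_nonneg hq.le (sub_nonneg.mpr hr2'.le), mul_nonneg hq.le (sub_nonneg.mpr hr3'.le),
          mul_nonneg hq.le (sub_nonneg.mpr hr4'.le), mul_nonneg hq.le (sub_nonneg.mpr ha.le),
          mul_nonneg hq.le (sub_nonneg.mpr hb.le), mul_nonneg hq.le (sub_nonneg.mpr hg.le)]

/-- div/mod transition for successor. -/
lemma succ_divmod (q n : ℕ) (hq : 0 < q) :
    ((n+1)/q = n/q + 1 ∧ (n+1)%q = 0 ∧ n%q + 1 = q) ∨
    ((n+1)/q = n/q ∧ (n+1)%q = n%q + 1) := by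
  have hm : n % q < q := Nat.mod_lt _ hq
  have hd := Nat.div_add_mod n q
  rcases Nat.lt_or_ge (n % q + 1) q with h | h
  · right
    have := (Nat.div_mod_unique hq (a := n+1) (d := n/q) (c := n%q+1)).mpr ⟨by omega, h⟩
    exact ⟨this.1, this.2⟩
  · left
    have hr : n % q + 1 = q := by omega
    have := (Nat.div_mod_unique hq (a := n+1) (d := n/q + 1) (c := 0)).mpr
      ⟨by rw [Nat.mul_succ]; omega, hq⟩
    exact ⟨this.1, this.2, hr⟩

/-- Closed form for the divisor-staircase sum. -/
lemma twoS (q : ℕ) (hq : 0 < q) (n : ℕ) :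
    2 * (q:ℤ) * (∑ k ∈ range n, ((k / q : ℕ) : ℤ)) =
      (n:ℤ) * (n - 1) - q * (q - 1) * ((n / q : ℕ) : ℤ)
        - ((n % q : ℕ) : ℤ) * (((n % q : ℕ) : ℤ) - 1) := by
  induction n with
  | zero => simp
  | succ n ih =>
    rw [Finset.sum_range_succ]
    have hd := Nat.div_add_mod n q
    rcases succ_divmod q n hq with ⟨h1, h2, h3⟩ | ⟨h1, h2⟩
    · rw [h1, h2]
      have h3' : ((n % q : ℕ) : ℤ) + 1 = (q : ℤ) := by exact_mod_cast h3
      have hd' : (q : ℤ) * ((n / q : ℕ) : ℤ) + ((n % q : ℕ) : ℤ) = (n : ℤ) := by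
        exact_mod_cast hd
      simp only [Nat.cast_add, Nat.cast_one, Nat.cast_zero]
      linear_combination ih + 2 * hd' + (-(((n % q : ℕ) : ℤ)) - (q:ℤ)) * h3'
    · rw [h1, h2]
      have hd' : (q : ℤ) * ((n / q : ℕ) : ℤ) + ((n % q : ℕ) : ℤ) = (n : ℤ) := by
        exact_mod_cast hd
      simp only [Nat.cast_add, Nat.cast_one, Nat.cast_zero]
      linear_combination ih + 2 * hd'

/-- The floor-sum inequality. -/
lemma S_ineq (q : ℕ) (hq : 0 < q) (a b c : ℕ) :
    (∑ k ∈ range (a+b), k / q) + (∑ k ∈ range (b+c), k / q) + (∑ k ∈ range (c+a), k / q)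
      ≤ (∑ k ∈ range a, k / q) + (∑ k ∈ range b, k / q) + (∑ k ∈ range c, k / q)
        + (∑ k ∈ range (a+b+c), k / q) := by
  have hqz : (0:ℤ) < q := by exact_mod_cast hq
  set α := a % q with hα
  set β := b % q with hβ
  set γ := c % q with hγ
  have hda := Nat.div_add_mod a q
  have hdb := Nat.div_add_mod b q
  have hdc := Nat.div_add_mod c q
  have hαq : α < q := Nat.mod_lt _ hq
  have hβq : β < q := Nat.mod_lt _ hq
  have hγq : γ < q := Nat.mod_lt _ hq
  have hab : (a + b) / q = a / q + b / q + (α + β) / q ∧ (a + b) % q = (α + β) % q := by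
    apply (Nat.div_mod_unique hq).mpr
    refine ⟨?_, Nat.mod_lt _ hq⟩
    have := Nat.div_add_mod (α + β) q
    calc (α + β) % q + q * (a / q + b / q + (α + β) / q)
        = (q * (a/q) + α) + (q * (b/q) + β) := by ring_nf; omega
      _ = a + b := by omega
  have hbc : (b + c) / q = b / q + c / q + (β + γ) / q ∧ (b + c) % q = (β + γ) % q := by
    apply (Nat.div_mod_unique hq).mpr
    refine ⟨?_, Nat.mod_lt _ hq⟩
    have := Nat.div_add_mod (β + γ) q
    calc (β + γ) % q + q * (b / q + c / q + (β + γ) / q)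
        = (q * (b/q) + β) + (q * (c/q) + γ) := by ring_nf; omega
      _ = b + c := by omega
  have hca : (c + a) / q = c / q + a / q + (γ + α) / q ∧ (c + a) % q = (γ + α) % q := by
    apply (Nat.div_mod_unique hq).mpr
    refine ⟨?_, Nat.mod_lt _ hq⟩
    have := Nat.div_add_mod (γ + α) q
    calc (γ + α) % q + q * (c / q + a / q + (γ + α) / q)
        = (q * (c/q) + γ) + (q * (a/q) + α) := by ring_nf; omega
      _ = c + a := by omega
  have habc : (a + b + c) / q = a / q + b / q + c / q + (α + β + γ) / q ∧
      (a + b + c) % q = (α + β + γ) % q := by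
    apply (Nat.div_mod_unique hq).mpr
    refine ⟨?_, Nat.mod_lt _ hq⟩
    have := Nat.div_add_mod (α + β + γ) q
    calc (α + β + γ) % q + q * (a / q + b / q + c / q + (α + β + γ) / q)
        = (q * (a/q) + α) + (q * (b/q) + β) + (q * (c/q) + γ) := by ring_nf; omega
      _ = a + b + c := by omega
  have Ea := twoS q hq a
  have Eb := twoS q hq b
  have Ec := twoS q hq c
  have Eab := twoS q hq (a+b)
  have Ebc := twoS q hq (b+c)
  have Eca := twoS q hq (c+a)
  have Eabc := twoS q hq (a+b+c)
  rw [hab.1, hab.2] at Eab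
  rw [hbc.1, hbc.2] at Ebc
  rw [hca.1, hca.2] at Eca
  rw [habc.1, habc.2] at Eabc
  have KEY := key_int (q:ℤ) (α:ℤ) (β:ℤ) (γ:ℤ)
    (((α + β) % q : ℕ) : ℤ) (((β + γ) % q : ℕ) : ℤ) (((γ + α) % q : ℕ) : ℤ)
    (((α + β + γ) % q : ℕ) : ℤ)
    (((α + β) / q : ℕ) : ℤ) (((β + γ) / q : ℕ) : ℤ) (((γ + α) / q : ℕ) : ℤ)
    (((α + β + γ) / q : ℕ) : ℤ)
    hqz (by positivity) (by exact_mod_cast hαq) (by positivity) (by exact_mod_cast hβq)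
    (by positivity) (by exact_mod_cast hγq)
    (by positivity) (by exact_mod_cast Nat.mod_lt (α + β) hq)
    (by positivity) (by exact_mod_cast Nat.mod_lt (β + γ) hq)
    (by positivity) (by exact_mod_cast Nat.mod_lt (γ + α) hq)
    (by positivity) (by exact_mod_cast Nat.mod_lt (α + β + γ) hq)
    (by exact_mod_cast Nat.div_add_mod (α + β) q)
    (by exact_mod_cast Nat.div_add_mod (β + γ) q)
    (by exact_mod_cast Nat.div_add_mod (γ + α) q)
    (by exact_mod_cast Nat.div_add_mod (α + β + γ) q)
  have HZ : 2 * (q:ℤ) * ((∑ k ∈ range (a+b), ((k / q : ℕ):ℤ)) + (∑ k ∈ range (b+c), ((k / q : ℕ):ℤ))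
      + (∑ k ∈ range (c+a), ((k / q : ℕ):ℤ)))
      ≤ 2 * (q:ℤ) * ((∑ k ∈ range a, ((k / q : ℕ):ℤ)) + (∑ k ∈ range b, ((k / q : ℕ):ℤ))
      + (∑ k ∈ range c, ((k / q : ℕ):ℤ)) + (∑ k ∈ range (a+b+c), ((k / q : ℕ):ℤ))) := by
    simp only [Nat.cast_add] at Ea Eb Ec Eab Ebc Eca Eabc
    linarith [KEY, Ea, Eb, Ec, Eab, Ebc, Eca, Eabc]
  have HZ' := le_of_mul_le_mul_left HZ (by positivity : (0:ℤ) < 2 * (q:ℤ))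
  exact_mod_cast HZ'

/-- The hyperfactorial `H(n) = 0! · 1! · ⋯ · (n-1)!`. -/
def hyperfac (n : ℕ) : ℕ := ∏ k ∈ Finset.range n, k.factorial

lemma hyperfac_ne_zero (n : ℕ) : hyperfac n ≠ 0 :=
  (Finset.prod_pos fun k _ => k.factorial_pos).ne'

lemma fact_le (p : ℕ) (hp : p.Prime) (a b c : ℕ) :
    (hyperfac (a+b)).factorization p + (hyperfac (b+c)).factorization p
        + (hyperfac (c+a)).factorization p
      ≤ (hyperfac a).factorization p + (hyperfac b).factorization p
        + (hyperfac c).factorization p + (hyperfac (a+b+c)).factorization p := by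
  haveI : Fact p.Prime := ⟨hp⟩
  set N := a + b + c with hN
  have hv : ∀ n, n ≤ N → (hyperfac n).factorization p
      = ∑ i ∈ Finset.Ico 1 (N+1), ∑ k ∈ range n, k / p ^ i := by
    intro n hn
    rw [hyperfac, Nat.factorization_prod (fun k _ => (Nat.factorial_pos k).ne'),
      Finsupp.finset_sum_apply]
    rw [← Finset.sum_comm]
    refine Finset.sum_congr rfl fun k hk => ?_
    have hk' : k < n := Finset.mem_range.mp hk
    rw [Nat.factorization_def _ hp]
    exact padicValNat_factorial (lt_of_le_of_lt (Nat.log_le_self p k) (by omega))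
  rw [hv a (by omega), hv b (by omega), hv c (by omega), hv (a+b) (by omega),
    hv (b+c) (by omega), hv (c+a) (by omega), hv (a+b+c) (by omega)]
  rw [← Finset.sum_add_distrib, ← Finset.sum_add_distrib, ← Finset.sum_add_distrib,
    ← Finset.sum_add_distrib, ← Finset.sum_add_distrib]
  refine Finset.sum_le_sum fun i _ => ?_
  exact S_ineq (p ^ i) (pow_pos hp.pos i) a b c

lemma hyperfac_dvd (a b c : ℕ) :
    hyperfac (a+b) * hyperfac (b+c) * hyperfac (c+a) ∣
      hyperfac a * hyperfac b * hyperfac c * hyperfac (a+b+c) := by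
  have h1 := hyperfac_ne_zero
  rw [← Nat.factorization_le_iff_dvd
    (mul_ne_zero (mul_ne_zero (h1 _) (h1 _)) (h1 _))
    (mul_ne_zero (mul_ne_zero (mul_ne_zero (h1 _) (h1 _)) (h1 _)) (h1 _))]
  refine Finsupp.le_def.mpr fun p => ?_
  by_cases hp : p.Prime
  · have e : ∀ x y : ℕ, x ≠ 0 → y ≠ 0 →
        (x * y).factorization p = x.factorization p + y.factorization p := by
      intro x y hx hy
      rw [Nat.factorization_mul hx hy, Finsupp.add_apply]
    rw [e _ _ (mul_ne_zero (h1 _) (h1 _)) (h1 _), e _ _ (h1 _) (h1 _),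
      e _ _ (mul_ne_zero (mul_ne_zero (h1 _) (h1 _)) (h1 _)) (h1 _),
      e _ _ (mul_ne_zero (h1 _) (h1 _)) (h1 _), e _ _ (h1 _) (h1 _)]
    have := fact_le p hp a b c
    omega
  · simp [Nat.factorization_eq_zero_of_not_prime _ hp]

/-- MacMahon's quantity `H(a)H(b)H(c)H(a+b+c)/(H(a+b)H(b+c)H(c+a))` is a
positive integer. -/
theorem macmahon_ratio_pos_int (a b c : ℕ) :
    ∃ m : ℕ, 0 < m ∧
      hyperfac a * hyperfac b * hyperfac c * hyperfac (a + b + c) =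
        m * (hyperfac (a + b) * hyperfac (b + c) * hyperfac (c + a)) := by
  obtain ⟨m, hm⟩ := hyperfac_dvd a b c
  refine ⟨m, ?_, by rw [hm]; ring⟩
  rcases Nat.eq_zero_or_pos m with h | h
  · exfalso
    apply mul_ne_zero (mul_ne_zero (mul_ne_zero (hyperfac_ne_zero a) (hyperfac_ne_zero b))
      (hyperfac_ne_zero c)) (hyperfac_ne_zero (a+b+c))
    rw [hm, h, mul_zero]
  · exact h
end

section
/- MacMahon's q-product formula equals ∏_{i=1}^{a} ∏_{j=1}^{b} ∏_{k=1}^{c} (1−q^{i+j+k−1})/(1−q^{i+j+k−2}); that is, H_q(a)H_q(b)H_q(c)H_q(a+b+c)/(H_q(a+b)H_q(b+c)H_q(c+a)) = ∏_{i,j,k} [i+j+k−1]_q/[i+j+k−2]_q, as rational functions in q. -/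
/-- The `q`-integer `[n]_q = 1 + q + ⋯ + q^{n-1}` in `ℚ(q)`. -/
noncomputable def qint (n : ℕ) : RatFunc ℚ := ∑ i ∈ Finset.range n, RatFunc.X ^ i

/-- The `q`-factorial `[n]_q! = ∏_{j=1}^n [j]_q`. -/
noncomputable def qfact (n : ℕ) : RatFunc ℚ := ∏ j ∈ Finset.range n, qint (j + 1)

/-- The `q`-hyperfactorial `H_q(n) = ∏_{k=0}^{n-1} [k]_q!`. -/
noncomputable def qhyperfac (n : ℕ) : RatFunc ℚ := ∏ k ∈ Finset.range n, qfact k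

lemma geom (n : ℕ) : qint n * (RatFunc.X - 1) = (RatFunc.X : RatFunc ℚ) ^ n - 1 :=
  geom_sum_mul _ n

lemma Xpow_sub_one_ne (n : ℕ) : (RatFunc.X : RatFunc ℚ) ^ (n + 1) - 1 ≠ 0 := by
  have h : (Polynomial.X : Polynomial ℚ) ^ (n+1) - 1 ≠ 0 := by
    have := Polynomial.X_pow_sub_C_ne_zero (n := n+1) (Nat.succ_pos n) (1 : ℚ)
    simpa using this
  have := RatFunc.algebraMap_ne_zero h
  simpa [map_sub, map_pow, RatFunc.algebraMap_X] using this

lemma qint_ne_zero (n : ℕ) : qint (n + 1) ≠ 0 := by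
  intro h
  have := geom (n + 1)
  rw [h, zero_mul] at this
  exact Xpow_sub_one_ne n this.symm

lemma one_sub_eq (n : ℕ) : 1 - (RatFunc.X : RatFunc ℚ) ^ n = qint n * (1 - RatFunc.X) := by
  have := geom n
  linear_combination this

lemma X_sub_one_ne : (1 : RatFunc ℚ) - RatFunc.X ≠ 0 := by
  have := Xpow_sub_one_ne 0
  intro h; apply this; rw [pow_one]; linear_combination -h

lemma ratio (m : ℕ) :
    (1 - (RatFunc.X : RatFunc ℚ) ^ (m + 2)) / (1 - (RatFunc.X : RatFunc ℚ) ^ (m + 1)) =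
      qint (m + 2) / qint (m + 1) := by
  rw [one_sub_eq, one_sub_eq, mul_div_mul_right _ _ X_sub_one_ne]

lemma qfact_ne_zero (n : ℕ) : qfact n ≠ 0 :=
  Finset.prod_ne_zero_iff.2 fun j _ => qint_ne_zero j

lemma qhyperfac_ne_zero (n : ℕ) : qhyperfac n ≠ 0 :=
  Finset.prod_ne_zero_iff.2 fun j _ => qfact_ne_zero j

lemma lemA (m n : ℕ) :
    ∏ k ∈ Finset.range n, qint (m + k + 1) = qfact (m + n) / qfact m := by
  rw [eq_div_iff (qfact_ne_zero m), mul_comm, qfact, qfact, Finset.prod_range_add]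

lemma lemB (m n : ℕ) :
    ∏ k ∈ Finset.range n, qfact (m + k) = qhyperfac (m + n) / qhyperfac m := by
  rw [eq_div_iff (qhyperfac_ne_zero m), mul_comm, qhyperfac, qhyperfac, Finset.prod_range_add]

lemma telescope (f : ℕ → RatFunc ℚ) (hf : ∀ i, f i ≠ 0) (n : ℕ) :
    ∏ i ∈ Finset.range n, f (i + 1) / f i = f n / f 0 := by
  induction n with
  | zero => simp [div_self (hf 0)]
  | succ n ih =>
    rw [Finset.prod_range_succ, ih, div_mul_div_comm, mul_comm (f n) (f (n + 1)),
      mul_div_mul_right _ _ (hf n)]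

noncomputable def qPhi (b c i : ℕ) : RatFunc ℚ :=
  qhyperfac (i + b + c) * qhyperfac i / (qhyperfac (i + b) * qhyperfac (i + c))

lemma qPhi_ne_zero (b c i : ℕ) : qPhi b c i ≠ 0 :=
  div_ne_zero (mul_ne_zero (qhyperfac_ne_zero _) (qhyperfac_ne_zero _))
    (mul_ne_zero (qhyperfac_ne_zero _) (qhyperfac_ne_zero _))

lemma step1 (c s : ℕ) :
    ∏ k ∈ Finset.range c, qint (s + k + 2) / qint (s + k + 1) =
      (qfact (s + 1 + c) * qfact s) / (qfact (s + 1) * qfact (s + c)) := by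
  rw [Finset.prod_div_distrib]
  have h1 : ∏ k ∈ Finset.range c, qint (s + k + 2) = qfact (s + 1 + c) / qfact (s + 1) := by
    rw [← lemA (s + 1) c]
    exact Finset.prod_congr rfl fun k _ => by congr 1; omega
  have h2 : ∏ k ∈ Finset.range c, qint (s + k + 1) = qfact (s + c) / qfact s := lemA s c
  rw [h1, h2]
  field_simp
  try ring

lemma step2 (b c i : ℕ) :
    ∏ j ∈ Finset.range b,
        (qfact (i + j + 1 + c) * qfact (i + j)) / (qfact (i + j + 1) * qfact (i + j + c)) =
      qPhi b c (i + 1) / qPhi b c i := by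
  rw [Finset.prod_div_distrib, Finset.prod_mul_distrib, Finset.prod_mul_distrib]
  have h1 : ∏ j ∈ Finset.range b, qfact (i + j + 1 + c) =
      qhyperfac (i + 1 + c + b) / qhyperfac (i + 1 + c) := by
    rw [← lemB (i + 1 + c) b]
    exact Finset.prod_congr rfl fun j _ => by congr 1; omega
  have h2 : ∏ j ∈ Finset.range b, qfact (i + j) = qhyperfac (i + b) / qhyperfac i := lemB i b
  have h3 : ∏ j ∈ Finset.range b, qfact (i + j + 1) =
      qhyperfac (i + 1 + b) / qhyperfac (i + 1) := by
    rw [← lemB (i + 1) b]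
    exact Finset.prod_congr rfl fun j _ => by congr 1; omega
  have h4 : ∏ j ∈ Finset.range b, qfact (i + j + c) =
      qhyperfac (i + c + b) / qhyperfac (i + c) := by
    rw [← lemB (i + c) b]
    exact Finset.prod_congr rfl fun j _ => by congr 1; omega
  rw [h1, h2, h3, h4, qPhi, qPhi]
  have e1 : i + 1 + b + c = i + 1 + c + b := by omega
  have e2 : i + b + c = i + c + b := by omega
  rw [e1, e2]
  field_simp
  try ring

/-- MacMahon's `q`-product formula: as rational functions in `q`,
`H_q(a)H_q(b)H_q(c)H_q(a+b+c)/(H_q(a+b)H_q(b+c)H_q(c+a)) =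
∏_{i=1}^a ∏_{j=1}^b ∏_{k=1}^c (1-q^{i+j+k-1})/(1-q^{i+j+k-2})`
(here `i, j, k` run over `1,…,a` etc., written via `0`-based indices). -/
theorem macmahon_q_product (a b c : ℕ) :
    qhyperfac a * qhyperfac b * qhyperfac c * qhyperfac (a + b + c) /
        (qhyperfac (a + b) * qhyperfac (b + c) * qhyperfac (c + a)) =
      ∏ i ∈ Finset.range a, ∏ j ∈ Finset.range b, ∏ k ∈ Finset.range c,
        (1 - (RatFunc.X : RatFunc ℚ) ^ (i + j + k + 2)) /
          (1 - (RatFunc.X : RatFunc ℚ) ^ (i + j + k + 1)) := by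
  symm
  calc
    ∏ i ∈ Finset.range a, ∏ j ∈ Finset.range b, ∏ k ∈ Finset.range c,
        (1 - (RatFunc.X : RatFunc ℚ) ^ (i + j + k + 2)) /
          (1 - (RatFunc.X : RatFunc ℚ) ^ (i + j + k + 1))
      = ∏ i ∈ Finset.range a, ∏ j ∈ Finset.range b, ∏ k ∈ Finset.range c,
          qint (i + j + k + 2) / qint (i + j + k + 1) :=
        Finset.prod_congr rfl fun i _ => Finset.prod_congr rfl fun j _ =>
          Finset.prod_congr rfl fun k _ => ratio (i + j + k)
    _ = ∏ i ∈ Finset.range a, ∏ j ∈ Finset.range b,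
          (qfact (i + j + 1 + c) * qfact (i + j)) / (qfact (i + j + 1) * qfact (i + j + c)) :=
        Finset.prod_congr rfl fun i _ => Finset.prod_congr rfl fun j _ => step1 c (i + j)
    _ = ∏ i ∈ Finset.range a, qPhi b c (i + 1) / qPhi b c i :=
        Finset.prod_congr rfl fun i _ => step2 b c i
    _ = qPhi b c a / qPhi b c 0 := telescope _ (qPhi_ne_zero b c) a
    _ = qhyperfac a * qhyperfac b * qhyperfac c * qhyperfac (a + b + c) /
        (qhyperfac (a + b) * qhyperfac (b + c) * qhyperfac (c + a)) := by
        rw [qPhi, qPhi]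
        have h0 : qhyperfac 0 = 1 := Finset.prod_range_zero _
        have e1 : 0 + b + c = b + c := by omega
        have e2 : 0 + b = b := by omega
        have e3 : 0 + c = c := by omega
        have e4 : c + a = a + c := by omega
        rw [h0, e1, e2, e3, e4]
        field_simp
        try ring
end

section
/- Graph-splitting for perfect matchings: let G be a finite bipartite graph with parts V₁, V₂, and let H be an induced subgraph such that every edge of G joining H to G−H has its H-endpoint in V₁ ∩ H, and H has equally many vertices in V₁ and V₂. Then the number of perfect matchings of G equals the number of perfect matchings of H times the number of perfect matchings of G − H. -/
open SimpleGraph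

/-- Restriction of a subgraph to an induced subgraph, with full vertex set. -/
def restrictSet {V : Type*} {G : SimpleGraph V} (S : Set V) (M : G.Subgraph) :
    (SimpleGraph.induce S G).Subgraph where
  verts := Set.univ
  Adj u v := M.Adj u v
  adj_sub h := M.adj_sub h
  edge_vert _ := Set.mem_univ _
  symm := ⟨fun _ _ h => M.adj_symm h⟩

/-- Glue subgraphs of the two induced subgraphs into a subgraph of `G`. -/
def glueSet {V : Type*} {G : SimpleGraph V} (S : Set V)
    (M₁ : (SimpleGraph.induce S G).Subgraph) (M₂ : (SimpleGraph.induce Sᶜ G).Subgraph) :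
    G.Subgraph where
  verts := Set.univ
  Adj u v := (∃ hu : u ∈ S, ∃ hv : v ∈ S, M₁.Adj ⟨u, hu⟩ ⟨v, hv⟩) ∨
    (∃ hu : u ∈ Sᶜ, ∃ hv : v ∈ Sᶜ, M₂.Adj ⟨u, hu⟩ ⟨v, hv⟩)
  adj_sub h := by rcases h with ⟨hu, hv, h⟩ | ⟨hu, hv, h⟩ <;> exact h.adj_sub
  edge_vert _ := Set.mem_univ _
  symm := ⟨fun u v h => by
    rcases h with ⟨hu, hv, h⟩ | ⟨hu, hv, h⟩
    · exact Or.inl ⟨hv, hu, h.symm⟩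
    · exact Or.inr ⟨hv, hu, h.symm⟩⟩

lemma restrictSet_pm {V : Type*} {G : SimpleGraph V} (S : Set V) (M : G.Subgraph)
    (hM : M.IsPerfectMatching) (h : ∀ u v, M.Adj u v → u ∈ S → v ∈ S) :
    (restrictSet S M).IsPerfectMatching := by
  constructor
  · rintro ⟨u, hu⟩ -
    obtain ⟨w, hw, huniq⟩ := hM.1 (hM.2 u)
    exact ⟨⟨w, h u w hw hu⟩, hw, fun y hy => Subtype.ext (huniq y.val hy)⟩
  · intro v; exact Set.mem_univ _

lemma glueSet_pm {V : Type*} {G : SimpleGraph V} (S : Set V)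
    {M₁ : (SimpleGraph.induce S G).Subgraph} {M₂ : (SimpleGraph.induce Sᶜ G).Subgraph}
    (h₁ : M₁.IsPerfectMatching) (h₂ : M₂.IsPerfectMatching) :
    (glueSet S M₁ M₂).IsPerfectMatching := by
  constructor
  · rintro v -
    by_cases hv : v ∈ S
    · obtain ⟨w, hw, huniq⟩ := h₁.1 (h₁.2 ⟨v, hv⟩)
      refine ⟨w.val, Or.inl ⟨hv, w.2, hw⟩, ?_⟩
      rintro y (⟨hv', hy, h⟩ | ⟨hv', hy, h⟩)
      · exact congrArg Subtype.val (huniq ⟨y, hy⟩ h)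
      · exact absurd hv hv'
    · obtain ⟨w, hw, huniq⟩ := h₂.1 (h₂.2 ⟨v, hv⟩)
      refine ⟨w.val, Or.inr ⟨hv, w.2, hw⟩, ?_⟩
      rintro y (⟨hv', hy, h⟩ | ⟨hv', hy, h⟩)
      · exact absurd hv' hv
      · exact congrArg Subtype.val (huniq ⟨y, hy⟩ h)
  · intro v; exact Set.mem_univ _

/-- Key lemma: a perfect matching of `G` uses no cross edge. -/
lemma no_cross {V : Type*} [Fintype V] {G : SimpleGraph V}
    {V₁ : Set V} (hbip : ∀ u v, G.Adj u v → (u ∈ V₁ ↔ v ∉ V₁))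
    {S : Set V}
    (hsep : ∀ u v, u ∈ S → v ∉ S → G.Adj u v → u ∈ V₁)
    (hbal : (S ∩ V₁).ncard = (S \ V₁).ncard)
    {M : G.Subgraph} (hM : M.IsPerfectMatching) :
    ∀ u v, M.Adj u v → u ∈ S → v ∈ S := by
  classical
  -- every vertex of S \ V₁ is matched within S, to a vertex of S ∩ V₁
  have key : ∀ u : V, u ∈ S → u ∉ V₁ → ∀ w, M.Adj u w → w ∈ S ∩ V₁ := by
    intro u huS huV w hw
    have hwS : w ∈ S := by
      by_contra hwS
      exact huV (hsep u w huS hwS (M.adj_sub hw))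
    have hwV : w ∈ V₁ := not_not.mp (fun h => huV ((hbip u w (M.adj_sub hw)).mpr h))
    exact ⟨hwS, hwV⟩
  -- the partner map from S \ V₁ to S ∩ V₁
  have hpart : ∀ u : V, ∃! w, M.Adj u w := fun u => hM.1 (hM.2 u)
  set f : ↥(S \ V₁) → ↥(S ∩ V₁) := fun a =>
    ⟨(hpart a.val).choose, key a.val a.2.1 a.2.2 _ (hpart a.val).choose_spec.1⟩ with hf
  have hfadj : ∀ a : ↥(S \ V₁), M.Adj a.val (f a).val := fun a => (hpart a.val).choose_spec.1
  have hinj : Function.Injective f := by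
    intro a₁ a₂ hEq
    have h1 : M.Adj (f a₁).val a₁.val := (hfadj a₁).symm
    have h2 : M.Adj (f a₁).val a₂.val := hEq ▸ (hfadj a₂).symm
    obtain ⟨w, -, huniq⟩ := hpart (f a₁).val
    exact Subtype.ext ((huniq _ h1).trans (huniq _ h2).symm)
  have hsurj : Function.Surjective f := by
    have hcard : Nat.card ↥(S \ V₁) = Nat.card ↥(S ∩ V₁) := by
      rw [Nat.card_coe_set_eq, Nat.card_coe_set_eq, hbal]
    exact ((Nat.bijective_iff_injective_and_card f).mpr ⟨hinj, hcard⟩).2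
  -- main claim
  intro u v huv huS
  by_cases huV : u ∈ V₁
  · obtain ⟨a, ha⟩ := hsurj ⟨u, huS, huV⟩
    have hau : M.Adj a.val u := by
      have := hfadj a
      rwa [ha] at this
    obtain ⟨w, -, huniq⟩ := hpart u
    have : v = a.val := (huniq _ huv).trans (huniq _ hau.symm).symm
    exact this ▸ a.2.1
  · exact (key u huS huV v huv).1

/-- Graph-splitting lemma for perfect matchings: if `G` is a finite bipartite
graph with parts `V₁` and its complement, and `S` induces a subgraph `H` such
that every edge of `G` joining `S` to its complement has its `S`-endpoint in
`V₁`, and `S` contains equally many vertices of the two parts, then the number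
of perfect matchings of `G` is the product of the numbers of perfect matchings
of the two induced subgraphs `H = G[S]` and `G - H = G[Sᶜ]`. -/
theorem matching_splitting {V : Type*} [Fintype V] (G : SimpleGraph V)
    (V₁ : Set V) (hbip : ∀ u v, G.Adj u v → (u ∈ V₁ ↔ v ∉ V₁))
    (S : Set V)
    (hsep : ∀ u v, u ∈ S → v ∉ S → G.Adj u v → u ∈ V₁)
    (hbal : (S ∩ V₁).ncard = (S \ V₁).ncard) :
    Nat.card {M : G.Subgraph // M.IsPerfectMatching} =
      Nat.card {M : (SimpleGraph.induce S G).Subgraph // M.IsPerfectMatching} *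
        Nat.card {M : (SimpleGraph.induce Sᶜ G).Subgraph // M.IsPerfectMatching} := by
  classical
  have hnc : ∀ (M : G.Subgraph), M.IsPerfectMatching → ∀ u v, M.Adj u v → u ∈ S → v ∈ S :=
    fun M hM => no_cross hbip hsep hbal hM
  have hncc : ∀ (M : G.Subgraph), M.IsPerfectMatching → ∀ u v, M.Adj u v → u ∈ Sᶜ → v ∈ Sᶜ := by
    intro M hM u v huv hu hvS
    exact hu (hnc M hM v u (M.adj_symm huv) hvS)
  have e : {M : G.Subgraph // M.IsPerfectMatching} ≃
      {M : (SimpleGraph.induce S G).Subgraph // M.IsPerfectMatching} ×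
        {M : (SimpleGraph.induce Sᶜ G).Subgraph // M.IsPerfectMatching} := by
    refine ⟨fun M => (⟨restrictSet S M.val, restrictSet_pm S M.val M.2 (hnc M.val M.2)⟩,
        ⟨restrictSet Sᶜ M.val, restrictSet_pm Sᶜ M.val M.2 (hncc M.val M.2)⟩),
      fun p => ⟨glueSet S p.1.val p.2.val, glueSet_pm S p.1.2 p.2.2⟩, ?_, ?_⟩
    · rintro ⟨M, hM⟩
      ext u v
      · simp only [glueSet, Set.mem_univ, true_iff]
        exact hM.2 u
      · constructor
        · rintro (⟨hu, hv, h⟩ | ⟨hu, hv, h⟩) <;> exact h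
        · intro h
          by_cases hu : u ∈ S
          · exact Or.inl ⟨hu, hnc M hM u v h hu, h⟩
          · exact Or.inr ⟨hu, hncc M hM u v h hu, h⟩
    · rintro ⟨⟨M₁, h₁⟩, ⟨M₂, h₂⟩⟩
      refine Prod.ext (Subtype.ext ?_) (Subtype.ext ?_)
      · ext u v
        · simp only [restrictSet, Set.mem_univ, true_iff]
          exact h₁.2 u
        · constructor
          · rintro (⟨hu, hv, h⟩ | ⟨hu, hv, h⟩)
            · exact h
            · exact absurd u.2 hu
          · intro h
            exact Or.inl ⟨u.2, v.2, h⟩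
      · ext u v
        · simp only [restrictSet, Set.mem_univ, true_iff]
          exact h₂.2 u
        · constructor
          · rintro (⟨hu, hv, h⟩ | ⟨hu, hv, h⟩)
            · exact absurd hu u.2
            · exact h
          · intro h
            exact Or.inr ⟨u.2, v.2, h⟩
  rw [Nat.card_congr e, Nat.card_prod]
end

section
/- Symmetry of the exponent functions: A^{(2)}_{x,y,z,t}(a;b) = A^{(1)}_{t,y,z,x}(b;a) for all non-negative integers x,y,z,t and all finite sequences a, b of non-negative integers. -/
open Finset

/-- The bracket symbol `⟨b,a⟩ = (a+1) + (a+2) + ⋯ + b`. -/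
def brk (b a : ℕ) : ℕ := ∑ k ∈ Finset.Icc (a + 1) b, k

/-- Sum of odd-indexed entries `a₁ + a₃ + ⋯` of a `1`-indexed sequence of
length `m`. -/
def oddSum (m : ℕ) (a : ℕ → ℕ) : ℕ := ∑ i ∈ range ((m + 1) / 2), a (2 * i + 1)

/-- Sum of even-indexed entries `a₂ + a₄ + ⋯` of a `1`-indexed sequence of
length `m`. -/
def evenSum (m : ℕ) (a : ℕ → ℕ) : ℕ := ∑ i ∈ range (m / 2), a (2 * i + 2)

/-- The exponent `A⁽¹⁾_{x,y,z,t}(a;b)` of equation (6.11), for `1`-indexed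
sequences `a = (a₁,…,a_m)`, `b = (b₁,…,b_n)`. -/
def A1 (x y z t m n : ℕ) (a b : ℕ → ℕ) : ℕ :=
  let oa := oddSum m a; let ea := evenSum m a
  let ob := oddSum n b; let eb := evenSum n b
  let Δ := x + y + t + ea + eb
  (∑ i ∈ range ((m + 1) / 2),
      a (2 * i + 1) * brk (x + ∑ j ∈ range i, a (2 * j + 2)) 0) +
  z * brk (x + y + ea) 0 +
  (∑ i ∈ range ((n + 1) / 2),
      b (2 * i + 1) * brk (x + y + ea + eb - ∑ j ∈ range i, b (2 * j + 2)) 0) +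
  (∑ i ∈ range (m / 2),
      a (2 * i + 2) * brk (Δ + y + oa + ob - ∑ j ∈ range (i + 1), a (2 * j + 1)) Δ) +
  z * brk (Δ + ob) Δ +
  (∑ i ∈ range (n / 2),
      b (2 * i + 2) * brk (Δ + ∑ j ∈ range (i + 1), b (2 * j + 1)) Δ)

/-- The exponent `A⁽²⁾_{x,y,z,t}(a;b)` of equation (6.12). -/
def A2 (x y z t m n : ℕ) (a b : ℕ → ℕ) : ℕ :=
  let oa := oddSum m a; let ea := evenSum m a
  let ob := oddSum n b; let eb := evenSum n b
  let Δ := x + y + t + ea + eb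
  (∑ i ∈ range ((m + 1) / 2),
      a (2 * i + 1) * brk (y + t + ea + eb - ∑ j ∈ range i, a (2 * j + 2)) 0) +
  z * brk (y + t + eb) 0 +
  (∑ i ∈ range ((n + 1) / 2),
      b (2 * i + 1) * brk (t + ∑ j ∈ range i, b (2 * j + 2)) 0) +
  (∑ i ∈ range (m / 2),
      a (2 * i + 2) * brk (Δ + ∑ j ∈ range (i + 1), a (2 * j + 1)) Δ) +
  z * brk (Δ + oa) Δ +
  (∑ i ∈ range (n / 2),
      b (2 * i + 2) * brk (Δ + y + oa + ob - ∑ j ∈ range (i + 1), b (2 * j + 1)) Δ)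

/-- Symmetry of the exponent functions:
`A⁽²⁾_{x,y,z,t}(a;b) = A⁽¹⁾_{t,y,z,x}(b;a)`. -/
theorem A2_eq_A1_swap (x y z t m n : ℕ) (a b : ℕ → ℕ) :
    A2 x y z t m n a b = A1 t y z x n m b a := by
  simp only [A1, A2]
  have c2 : y + t + evenSum n b = t + y + evenSum n b := by ring
  have c3 : x + y + t + evenSum m a + evenSum n b
      = t + y + x + evenSum n b + evenSum m a := by ring
  rw [c3, c2]
  rw [show y + t + evenSum m a + evenSum n b
      = t + y + evenSum n b + evenSum m a from by ring]
  rw [show t + y + x + evenSum n b + evenSum m a + y + oddSum m a + oddSum n b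
      = t + y + x + evenSum n b + evenSum m a + y + oddSum n b + oddSum m a from by ring]
  ring
end

section
/- Exponent recurrence: A^{(1)}_{x,y,z,t}(a;b) + A^{(1)}_{x−1,y+1,z−1,t−1}(a;b) = A^{(1)}_{x,y+1,z−1,t−1}(a;b) + A^{(1)}_{x−1,y,z,t}(a;b) + x + y − z + 1, for all integers x,t ≥ 1, y ≥ 0, z ≥ 1 and all sequences a, b of non-negative integers. -/
open Finset

theorem brk_succ (a u : ℕ) : brk (a + u + 1) a = brk (a + u) a + (a + u + 1) := by
  unfold brk
  exact Finset.sum_Icc_succ_top (by omega) _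

theorem brk2' (a b : ℕ) (h : a ≤ b) : (brk b a : ℤ) * 2 = ((b:ℤ) - a) * ((a:ℤ) + b + 1) := by
  obtain ⟨u, rfl⟩ := Nat.exists_eq_add_of_le h
  induction u with
  | zero => simp [brk]
  | succ u ih =>
    have h1 : a + (u + 1) = a + u + 1 := by omega
    rw [h1, brk_succ]
    push_cast
    push_cast at ih
    linear_combination ih (Nat.le_add_right a u)

theorem A1cast (x y z t m n : ℕ) (a b : ℕ → ℕ) (X Y Z D : ℤ)
    (hX : X = (x:ℤ)) (hY : Y = (y:ℤ)) (hZ : Z = (z:ℤ))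
    (hD : D = (x:ℤ) + (y:ℤ) + (t:ℤ) + (evenSum m a : ℤ) + (evenSum n b : ℤ)) :
    (A1 x y z t m n a b : ℤ) * 2 =
    (∑ i ∈ range ((m + 1) / 2), (a (2 * i + 1) : ℤ) *
        ((X + ∑ j ∈ range i, (a (2 * j + 2) : ℤ)) *
         (X + ∑ j ∈ range i, (a (2 * j + 2) : ℤ) + 1)))
    + Z * ((X + Y + (evenSum m a : ℤ)) * (X + Y + (evenSum m a : ℤ) + 1))
    + (∑ i ∈ range ((n + 1) / 2), (b (2 * i + 1) : ℤ) *
        ((X + Y + (evenSum m a : ℤ) + (evenSum n b : ℤ) - ∑ j ∈ range i, (b (2 * j + 2) : ℤ)) *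
         (X + Y + (evenSum m a : ℤ) + (evenSum n b : ℤ) - ∑ j ∈ range i, (b (2 * j + 2) : ℤ) + 1)))
    + (∑ i ∈ range (m / 2), (a (2 * i + 2) : ℤ) *
        ((D + Y + (oddSum m a : ℤ) + (oddSum n b : ℤ) - ∑ j ∈ range (i + 1), (a (2 * j + 1) : ℤ)) *
         (D + Y + (oddSum m a : ℤ) + (oddSum n b : ℤ) - ∑ j ∈ range (i + 1), (a (2 * j + 1) : ℤ) + 1)
         - D * (D + 1)))
    + Z * ((D + (oddSum n b : ℤ)) * (D + (oddSum n b : ℤ) + 1) - D * (D + 1))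
    + (∑ i ∈ range (n / 2), (b (2 * i + 2) : ℤ) *
        ((D + ∑ j ∈ range (i + 1), (b (2 * j + 1) : ℤ)) *
         (D + ∑ j ∈ range (i + 1), (b (2 * j + 1) : ℤ) + 1) - D * (D + 1))) := by
  subst hX hY hZ hD
  simp only [A1]
  push_cast
  have H1 : (∑ i ∈ range ((m + 1) / 2),
        (a (2 * i + 1) : ℤ) * (brk (x + ∑ j ∈ range i, a (2 * j + 2)) 0 : ℤ)) * 2
      = ∑ i ∈ range ((m + 1) / 2), (a (2 * i + 1) : ℤ) *
        (((x:ℤ) + ∑ j ∈ range i, (a (2 * j + 2) : ℤ)) *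
         ((x:ℤ) + ∑ j ∈ range i, (a (2 * j + 2) : ℤ) + 1)) := by
    rw [Finset.sum_mul]
    refine Finset.sum_congr rfl fun i _ => ?_
    have h := brk2' 0 (x + ∑ j ∈ range i, a (2 * j + 2)) (Nat.zero_le _)
    push_cast at h
    linear_combination (a (2 * i + 1) : ℤ) * h
  have H3 : (∑ i ∈ range ((n + 1) / 2),
        (b (2 * i + 1) : ℤ) * (brk (x + y + evenSum m a + evenSum n b - ∑ j ∈ range i, b (2 * j + 2)) 0 : ℤ)) * 2
      = ∑ i ∈ range ((n + 1) / 2), (b (2 * i + 1) : ℤ) *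
        (((x:ℤ) + (y:ℤ) + (evenSum m a : ℤ) + (evenSum n b : ℤ) - ∑ j ∈ range i, (b (2 * j + 2) : ℤ)) *
         ((x:ℤ) + (y:ℤ) + (evenSum m a : ℤ) + (evenSum n b : ℤ) - ∑ j ∈ range i, (b (2 * j + 2) : ℤ) + 1)) := by
    rw [Finset.sum_mul]
    refine Finset.sum_congr rfl fun i hi => ?_
    have hmem := Finset.mem_range.mp hi
    have hsub : ∑ j ∈ range i, b (2 * j + 2) ≤ evenSum n b := by
      unfold evenSum
      apply Finset.sum_le_sum_of_subset
      exact Finset.range_subset_range.mpr (by omega)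
    have hle : ∑ j ∈ range i, b (2 * j + 2) ≤ x + y + evenSum m a + evenSum n b := by omega
    have h := brk2' 0 (x + y + evenSum m a + evenSum n b - ∑ j ∈ range i, b (2 * j + 2)) (Nat.zero_le _)
    push_cast [Nat.cast_sub hle] at h
    linear_combination (b (2 * i + 1) : ℤ) * h
  have H4 : (∑ i ∈ range (m / 2),
        (a (2 * i + 2) : ℤ) * (brk (x + y + t + evenSum m a + evenSum n b + y + oddSum m a + oddSum n b - ∑ j ∈ range (i + 1), a (2 * j + 1)) (x + y + t + evenSum m a + evenSum n b) : ℤ)) * 2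
      = ∑ i ∈ range (m / 2), (a (2 * i + 2) : ℤ) *
        ((((x:ℤ) + (y:ℤ) + (t:ℤ) + (evenSum m a : ℤ) + (evenSum n b : ℤ)) + (y:ℤ) + (oddSum m a : ℤ) + (oddSum n b : ℤ) - ∑ j ∈ range (i + 1), (a (2 * j + 1) : ℤ)) *
         (((x:ℤ) + (y:ℤ) + (t:ℤ) + (evenSum m a : ℤ) + (evenSum n b : ℤ)) + (y:ℤ) + (oddSum m a : ℤ) + (oddSum n b : ℤ) - ∑ j ∈ range (i + 1), (a (2 * j + 1) : ℤ) + 1)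
         - ((x:ℤ) + (y:ℤ) + (t:ℤ) + (evenSum m a : ℤ) + (evenSum n b : ℤ)) * (((x:ℤ) + (y:ℤ) + (t:ℤ) + (evenSum m a : ℤ) + (evenSum n b : ℤ)) + 1)) := by
    rw [Finset.sum_mul]
    refine Finset.sum_congr rfl fun i hi => ?_
    have hmem := Finset.mem_range.mp hi
    have hsub : ∑ j ∈ range (i + 1), a (2 * j + 1) ≤ oddSum m a := by
      unfold oddSum
      apply Finset.sum_le_sum_of_subset
      exact Finset.range_subset_range.mpr (by omega)
    have hle : ∑ j ∈ range (i + 1), a (2 * j + 1) ≤ x + y + t + evenSum m a + evenSum n b + y + oddSum m a + oddSum n b := by omega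
    have hle2 : x + y + t + evenSum m a + evenSum n b ≤ x + y + t + evenSum m a + evenSum n b + y + oddSum m a + oddSum n b - ∑ j ∈ range (i + 1), a (2 * j + 1) := by omega
    have h := brk2' (x + y + t + evenSum m a + evenSum n b) (x + y + t + evenSum m a + evenSum n b + y + oddSum m a + oddSum n b - ∑ j ∈ range (i + 1), a (2 * j + 1)) hle2
    push_cast [Nat.cast_sub hle] at h
    linear_combination (a (2 * i + 2) : ℤ) * h
  have H6 : (∑ i ∈ range (n / 2),
        (b (2 * i + 2) : ℤ) * (brk (x + y + t + evenSum m a + evenSum n b + ∑ j ∈ range (i + 1), b (2 * j + 1)) (x + y + t + evenSum m a + evenSum n b) : ℤ)) * 2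
      = ∑ i ∈ range (n / 2), (b (2 * i + 2) : ℤ) *
        ((((x:ℤ) + (y:ℤ) + (t:ℤ) + (evenSum m a : ℤ) + (evenSum n b : ℤ)) + ∑ j ∈ range (i + 1), (b (2 * j + 1) : ℤ)) *
         (((x:ℤ) + (y:ℤ) + (t:ℤ) + (evenSum m a : ℤ) + (evenSum n b : ℤ)) + ∑ j ∈ range (i + 1), (b (2 * j + 1) : ℤ) + 1)
         - ((x:ℤ) + (y:ℤ) + (t:ℤ) + (evenSum m a : ℤ) + (evenSum n b : ℤ)) * (((x:ℤ) + (y:ℤ) + (t:ℤ) + (evenSum m a : ℤ) + (evenSum n b : ℤ)) + 1)) := by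
    rw [Finset.sum_mul]
    refine Finset.sum_congr rfl fun i _ => ?_
    have h := brk2' (x + y + t + evenSum m a + evenSum n b) (x + y + t + evenSum m a + evenSum n b + ∑ j ∈ range (i + 1), b (2 * j + 1)) (Nat.le_add_right _ _)
    push_cast at h
    linear_combination (b (2 * i + 2) : ℤ) * h
  have h2 := brk2' 0 (x + y + evenSum m a) (Nat.zero_le _)
  push_cast at h2
  have h5 := brk2' (x + y + t + evenSum m a + evenSum n b) (x + y + t + evenSum m a + evenSum n b + oddSum n b) (Nat.le_add_right _ _)
  push_cast at h5
  linear_combination H1 + H3 + H4 + H6 + (z:ℤ) * h2 + (z:ℤ) * h5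

/-- The exponent recurrence (8.25):
`A⁽¹⁾_{x,y,z,t} + A⁽¹⁾_{x-1,y+1,z-1,t-1} =
 A⁽¹⁾_{x,y+1,z-1,t-1} + A⁽¹⁾_{x-1,y,z,t} + x + y - z + 1`
for `x, t ≥ 1`, `z ≥ 1`, as an identity of integers. -/
theorem A1_recurrence (x y z t m n : ℕ) (hx : 1 ≤ x) (ht : 1 ≤ t) (hz : 1 ≤ z)
    (a b : ℕ → ℕ) :
    (A1 x y z t m n a b : ℤ) + (A1 (x - 1) (y + 1) (z - 1) (t - 1) m n a b : ℤ) =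
      (A1 x (y + 1) (z - 1) (t - 1) m n a b : ℤ) + (A1 (x - 1) y z t m n a b : ℤ) +
        (x : ℤ) + (y : ℤ) - (z : ℤ) + 1 := by
  obtain ⟨x', rfl⟩ : ∃ k, x = k + 1 := ⟨x - 1, by omega⟩
  obtain ⟨t', rfl⟩ : ∃ k, t = k + 1 := ⟨t - 1, by omega⟩
  obtain ⟨z', rfl⟩ : ∃ k, z = k + 1 := ⟨z - 1, by omega⟩
  simp only [Nat.add_sub_cancel]
  set d0 : ℤ := (x':ℤ) + (y:ℤ) + (t':ℤ) + (evenSum m a : ℤ) + (evenSum n b : ℤ) + 1 with hd0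
  have h1 := A1cast (x' + 1) y (z' + 1) (t' + 1) m n a b ((x':ℤ) + 1) (y:ℤ) ((z':ℤ) + 1) (d0 + 1)
    (by push_cast; ring_nf) (by push_cast; ring_nf) (by push_cast; ring_nf) (by rw [hd0]; push_cast; ring)
  have h2 := A1cast x' (y + 1) z' t' m n a b (x':ℤ) ((y:ℤ) + 1) (z':ℤ) d0
    (by push_cast; ring_nf) (by push_cast; ring_nf) (by push_cast; ring_nf) (by rw [hd0]; push_cast; ring)
  have h3 := A1cast (x' + 1) (y + 1) z' t' m n a b ((x':ℤ) + 1) ((y:ℤ) + 1) (z':ℤ) (d0 + 1)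
    (by push_cast; ring_nf) (by push_cast; ring_nf) (by push_cast; ring_nf) (by rw [hd0]; push_cast; ring)
  have h4 := A1cast x' y (z' + 1) (t' + 1) m n a b (x':ℤ) (y:ℤ) ((z':ℤ) + 1) d0
    (by push_cast; ring_nf) (by push_cast; ring_nf) (by push_cast; ring_nf) (by rw [hd0]; push_cast; ring)
  have hT3 :
      (∑ i ∈ range ((n + 1) / 2), (b (2 * i + 1) : ℤ) *
        ((((x':ℤ) + 1) + (y:ℤ) + (evenSum m a : ℤ) + (evenSum n b : ℤ) - ∑ j ∈ range i, (b (2 * j + 2) : ℤ)) *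
         (((x':ℤ) + 1) + (y:ℤ) + (evenSum m a : ℤ) + (evenSum n b : ℤ) - ∑ j ∈ range i, (b (2 * j + 2) : ℤ) + 1)))
      + (∑ i ∈ range ((n + 1) / 2), (b (2 * i + 1) : ℤ) *
        (((x':ℤ) + ((y:ℤ) + 1) + (evenSum m a : ℤ) + (evenSum n b : ℤ) - ∑ j ∈ range i, (b (2 * j + 2) : ℤ)) *
         ((x':ℤ) + ((y:ℤ) + 1) + (evenSum m a : ℤ) + (evenSum n b : ℤ) - ∑ j ∈ range i, (b (2 * j + 2) : ℤ) + 1)))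
      - (∑ i ∈ range ((n + 1) / 2), (b (2 * i + 1) : ℤ) *
        ((((x':ℤ) + 1) + ((y:ℤ) + 1) + (evenSum m a : ℤ) + (evenSum n b : ℤ) - ∑ j ∈ range i, (b (2 * j + 2) : ℤ)) *
         (((x':ℤ) + 1) + ((y:ℤ) + 1) + (evenSum m a : ℤ) + (evenSum n b : ℤ) - ∑ j ∈ range i, (b (2 * j + 2) : ℤ) + 1)))
      - (∑ i ∈ range ((n + 1) / 2), (b (2 * i + 1) : ℤ) *
        (((x':ℤ) + (y:ℤ) + (evenSum m a : ℤ) + (evenSum n b : ℤ) - ∑ j ∈ range i, (b (2 * j + 2) : ℤ)) *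
         ((x':ℤ) + (y:ℤ) + (evenSum m a : ℤ) + (evenSum n b : ℤ) - ∑ j ∈ range i, (b (2 * j + 2) : ℤ) + 1)))
      = -2 * (oddSum n b : ℤ) := by
    have hob : (oddSum n b : ℤ) = ∑ i ∈ range ((n + 1) / 2), (b (2 * i + 1) : ℤ) := by
      unfold oddSum; push_cast; ring
    rw [hob, ← Finset.sum_add_distrib, ← Finset.sum_sub_distrib, ← Finset.sum_sub_distrib,
      Finset.mul_sum]
    exact Finset.sum_congr rfl fun i _ => by ring
  have hT4 :
      (∑ i ∈ range (m / 2), (a (2 * i + 2) : ℤ) *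
        (((d0 + 1) + (y:ℤ) + (oddSum m a : ℤ) + (oddSum n b : ℤ) - ∑ j ∈ range (i + 1), (a (2 * j + 1) : ℤ)) *
         ((d0 + 1) + (y:ℤ) + (oddSum m a : ℤ) + (oddSum n b : ℤ) - ∑ j ∈ range (i + 1), (a (2 * j + 1) : ℤ) + 1)
         - (d0 + 1) * ((d0 + 1) + 1)))
      + (∑ i ∈ range (m / 2), (a (2 * i + 2) : ℤ) *
        ((d0 + ((y:ℤ) + 1) + (oddSum m a : ℤ) + (oddSum n b : ℤ) - ∑ j ∈ range (i + 1), (a (2 * j + 1) : ℤ)) *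
         (d0 + ((y:ℤ) + 1) + (oddSum m a : ℤ) + (oddSum n b : ℤ) - ∑ j ∈ range (i + 1), (a (2 * j + 1) : ℤ) + 1)
         - d0 * (d0 + 1)))
      - (∑ i ∈ range (m / 2), (a (2 * i + 2) : ℤ) *
        (((d0 + 1) + ((y:ℤ) + 1) + (oddSum m a : ℤ) + (oddSum n b : ℤ) - ∑ j ∈ range (i + 1), (a (2 * j + 1) : ℤ)) *
         ((d0 + 1) + ((y:ℤ) + 1) + (oddSum m a : ℤ) + (oddSum n b : ℤ) - ∑ j ∈ range (i + 1), (a (2 * j + 1) : ℤ) + 1)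
         - (d0 + 1) * ((d0 + 1) + 1)))
      - (∑ i ∈ range (m / 2), (a (2 * i + 2) : ℤ) *
        ((d0 + (y:ℤ) + (oddSum m a : ℤ) + (oddSum n b : ℤ) - ∑ j ∈ range (i + 1), (a (2 * j + 1) : ℤ)) *
         (d0 + (y:ℤ) + (oddSum m a : ℤ) + (oddSum n b : ℤ) - ∑ j ∈ range (i + 1), (a (2 * j + 1) : ℤ) + 1)
         - d0 * (d0 + 1)))
      = -2 * (evenSum m a : ℤ) := by
    have hea : (evenSum m a : ℤ) = ∑ i ∈ range (m / 2), (a (2 * i + 2) : ℤ) := by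
      unfold evenSum; push_cast; ring
    rw [hea, ← Finset.sum_add_distrib, ← Finset.sum_sub_distrib, ← Finset.sum_sub_distrib,
      Finset.mul_sum]
    exact Finset.sum_congr rfl fun i _ => by ring
  refine mul_right_cancel₀ (b := (2:ℤ)) (by norm_num) ?_
  push_cast
  linear_combination h1 + h2 - h3 - h4 + hT3 + hT4
end
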